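/- Let q, r > 1 and let c(z₁,z₂) = [(1−q^{-1}z₁^{-1}z₂^{-1})(1−q^{-1}z₁^{-1}z₂)(1−r^{-1}z₁^{-2})(1−r^{-1}z₂^{-2})] / [(1−z₁^{-1}z₂^{-1})(1−z₁^{-1}z₂)(1−z₁^{-2})(1−z₂^{-2})]. Then for t₂ on the unit circle, the function z ↦ 1/c(z^{-1}, t₂^{-1}) extends holomorphically to a neighborhood of the closed unit disc in z (its poles z = q t₂^{±1}, ±√r lie outside), and (1/2πi)∮_{|z|=1} (1/c(z^{-1},t₂^{-1})) dz/z = (1 − t₂²)/(1 − r^{-1}t₂²). -/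

import Mathlib

private lemma one_sub_ne (a : ℂ) (h : ‖a‖ < 1) : (1 : ℂ) - a ≠ 0 := by
  intro h0
  have : a = 1 := by linear_combination -h0
  rw [this] at h
  simp at h

/-- The function `z ↦ 1/c(z⁻¹, t⁻¹)` arising from the `C̃₂` Plancherel measure is
holomorphic on a neighbourhood of the closed unit disc, and its averaged contour integral
over the unit circle equals `(1 - t²)/(1 - r⁻¹t²)`. -/
theorem stmt16 (q r : ℝ) (hq : 1 < q) (hr : 1 < r) (t : ℂ) (ht : ‖t‖ = 1)
    (ht2 : t ^ 2 ≠ 1)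
    (g : ℂ → ℂ)
    (hg : ∀ z : ℂ, g z =
      ((1 - z * t) * (1 - z * t⁻¹) * (1 - z ^ 2) * (1 - t ^ 2)) /
      ((1 - (q : ℂ)⁻¹ * z * t) * (1 - (q : ℂ)⁻¹ * z * t⁻¹) *
        (1 - (r : ℂ)⁻¹ * z ^ 2) * (1 - (r : ℂ)⁻¹ * t ^ 2))) :
    (∃ R : ℝ, 1 < R ∧ DifferentiableOn ℂ g (Metric.ball 0 R)) ∧
    (2 * (Real.pi : ℂ) * Complex.I)⁻¹ * (∮ z in C(0, 1), g z / z) =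
      (1 - t ^ 2) / (1 - (r : ℂ)⁻¹ * t ^ 2) := by
  have hq0 : (0:ℝ) < q := lt_trans zero_lt_one hq
  have hr0 : (0:ℝ) < r := lt_trans zero_lt_one hr
  have ht1 : ‖t⁻¹‖ = 1 := by rw [norm_inv, ht]; norm_num
  have habsq : ‖(q:ℂ)⁻¹‖ = q⁻¹ := by
    rw [norm_inv, Complex.norm_real, Real.norm_eq_abs, abs_of_pos hq0]
  have habsr : ‖(r:ℂ)⁻¹‖ = r⁻¹ := by
    rw [norm_inv, Complex.norm_real, Real.norm_eq_abs, abs_of_pos hr0]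
  set R : ℝ := min q (Real.sqrt r) with hR
  have hR1 : 1 < R := lt_min hq (by rwa [Real.lt_sqrt zero_le_one, one_pow])
  -- denominator nonvanishing on ball 0 R
  have hden : ∀ z : ℂ, ‖z‖ < R →
      ((1 - (q : ℂ)⁻¹ * z * t) * (1 - (q : ℂ)⁻¹ * z * t⁻¹) *
        (1 - (r : ℂ)⁻¹ * z ^ 2) * (1 - (r : ℂ)⁻¹ * t ^ 2)) ≠ 0 := by
    intro z hz
    have hzq : ‖z‖ < q := lt_of_lt_of_le hz (min_le_left _ _)
    have hzr : ‖z‖ < Real.sqrt r := lt_of_lt_of_le hz (min_le_right _ _)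
    have hzr2 : ‖z‖ ^ 2 < r := by
      have := Real.lt_sqrt (norm_nonneg z) |>.mp hzr
      linarith
    have h1 : ‖(q:ℂ)⁻¹ * z * t‖ < 1 := by
      rw [norm_mul, norm_mul, habsq, ht, mul_one]
      rw [inv_mul_lt_one₀ hq0]; exact hzq
    have h2 : ‖(q:ℂ)⁻¹ * z * t⁻¹‖ < 1 := by
      rw [norm_mul, norm_mul, habsq, ht1, mul_one]
      rw [inv_mul_lt_one₀ hq0]; exact hzq
    have h3 : ‖(r:ℂ)⁻¹ * z ^ 2‖ < 1 := by
      rw [norm_mul, habsr, norm_pow]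
      rw [inv_mul_lt_one₀ hr0]; exact hzr2
    have h4 : ‖(r:ℂ)⁻¹ * t ^ 2‖ < 1 := by
      rw [norm_mul, habsr, norm_pow, ht, one_pow, mul_one]
      rw [inv_lt_one₀ hr0] at *; exact hr
    exact mul_ne_zero (mul_ne_zero (mul_ne_zero (one_sub_ne _ h1) (one_sub_ne _ h2))
      (one_sub_ne _ h3)) (one_sub_ne _ h4)
  have hgeq : g = fun z => ((1 - z * t) * (1 - z * t⁻¹) * (1 - z ^ 2) * (1 - t ^ 2)) /
      ((1 - (q : ℂ)⁻¹ * z * t) * (1 - (q : ℂ)⁻¹ * z * t⁻¹) *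
        (1 - (r : ℂ)⁻¹ * z ^ 2) * (1 - (r : ℂ)⁻¹ * t ^ 2)) := funext hg
  have hdiff : DifferentiableOn ℂ g (Metric.ball 0 R) := by
    rw [hgeq]
    intro z hz
    rw [Metric.mem_ball, dist_zero_right] at hz
    apply DifferentiableAt.differentiableWithinAt
    apply DifferentiableAt.div
    · fun_prop
    · fun_prop
    · exact hden z hz
  refine ⟨⟨R, hR1, hdiff⟩, ?_⟩
  have hcl : DiffContOnCl ℂ g (Metric.ball (0:ℂ) 1) := by
    apply DifferentiableOn.diffContOnCl
    apply hdiff.mono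
    intro z hz
    have hz' : z ∈ Metric.closedBall (0:ℂ) 1 := by
      simpa using Metric.closure_ball_subset_closedBall hz
    rw [Metric.mem_closedBall] at hz'
    rw [Metric.mem_ball]
    exact lt_of_le_of_lt hz' hR1
  have key := hcl.circleIntegral_sub_inv_smul (w := 0) (by simp)
  have : (∮ z in C(0, 1), g z / z) = (∮ z in C(0, 1), (z - 0)⁻¹ • g z) := by
    apply circleIntegral.integral_congr zero_le_one
    intro z hz
    simp [div_eq_mul_inv, mul_comm]
  rw [this, key]
  have hg0 : g 0 = (1 - t ^ 2) / (1 - (r : ℂ)⁻¹ * t ^ 2) := by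
    rw [hg 0]; norm_num
  rw [smul_eq_mul, hg0]
  rw [inv_mul_cancel_left₀]
  simp [Real.pi_ne_zero, Complex.I_ne_zero]
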